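/- arXiv:2508.07886 — 4 statements merged into one kernel-verified Lean document; each statement's English description precedes it below -/
import Mathlib

section
/- Let H satisfy: H odd, H(0)=0, H'(0)=1, H' > 0, H'' < 0 on (0,∞), and there exists z_H > 0 with H''' ≤ 0 on [0, z_H] and H''' > 0 on (z_H, ∞), and H increases to 1 at +∞. Define G(x) = x(1 + H'(x)) - 2H(x). Then there exists a unique d₁ > 0 with G(d₁) = 0; moreover G < 0 on (0, d₁) and G > 0 on (d₁, ∞). -/
theorem stmt_5 (H : ℝ → ℝ) (zH : ℝ) (hzH : 0 < zH)
    (hC3 : ContDiff ℝ 3 H)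
    (hodd : ∀ x, H (-x) = -H x)
    (h0 : H 0 = 0) (h1 : deriv H 0 = 1)
    (hpos : ∀ x, 0 < deriv H x)
    (hconc : ∀ x > (0:ℝ), deriv (deriv H) x < 0)
    (h3a : ∀ x : ℝ, |x| ≤ zH → deriv (deriv (deriv H)) x ≤ 0)
    (h3b : ∀ x : ℝ, zH < |x| → 0 < deriv (deriv (deriv H)) x)
    (hlim1 : Filter.Tendsto H Filter.atTop (nhds 1))
    (hlim2 : Filter.Tendsto H Filter.atBot (nhds (-1)))
    (G : ℝ → ℝ) (hG : G = fun x => x * (1 + deriv H x) - 2 * H x) :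
    ∃ d₁ > (0:ℝ), G d₁ = 0 ∧ (∀ x > (0:ℝ), G x = 0 → x = d₁) ∧
      (∀ x, 0 < x → x < d₁ → G x < 0) ∧ (∀ x, d₁ < x → 0 < G x) := by
  -- smoothness infrastructure
  have h3 : ContDiff ℝ ((2:ℕ) + 1) H := by exact_mod_cast hC3
  have hd1 : Differentiable ℝ H := hC3.differentiable (by norm_num)
  have hf1 : ContDiff ℝ ((1:ℕ) + 1) (deriv H) := by
    have := (contDiff_succ_iff_deriv.mp h3).2.2
    exact_mod_cast this
  have hd2 : Differentiable ℝ (deriv H) := hf1.differentiable (by norm_num)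
  have hf2 : ContDiff ℝ 1 (deriv (deriv H)) := by
    have := (contDiff_succ_iff_deriv.mp hf1).2.2
    exact_mod_cast this
  have hd3 : Differentiable ℝ (deriv (deriv H)) := hf2.differentiable (by norm_num)
  set φ : ℝ → ℝ := fun x => 1 - deriv H x + x * deriv (deriv H) x with hφdef
  have hφdiff : Differentiable ℝ φ :=
    ((differentiable_const 1).sub hd2).add (differentiable_id.mul hd3)
  -- derivative of G is φ
  have hDG : ∀ x, HasDerivAt G (φ x) x := by
    intro x
    have h : HasDerivAt (fun x => x * (1 + deriv H x) - 2 * H x)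
        (1 * (1 + deriv H x) + x * (0 + deriv (deriv H) x) - 2 * deriv H x) x :=
      ((hasDerivAt_id x).mul ((hasDerivAt_const x 1).add (hd2 x).hasDerivAt)).sub
        ((hd1 x).hasDerivAt.const_mul 2)
    rw [hG]
    convert h using 1
    simp [hφdef]; ring
  have hderivG : deriv G = φ := funext fun x => (hDG x).deriv
  have hGdiff : Differentiable ℝ G := fun x => (hDG x).differentiableAt
  -- derivative of φ
  have hDφ : ∀ x : ℝ, HasDerivAt φ (x * deriv (deriv (deriv H)) x) x := by
    intro x
    have h : HasDerivAt (fun x => 1 - deriv H x + x * deriv (deriv H) x)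
        (0 - deriv (deriv H) x + (1 * deriv (deriv H) x + x * deriv (deriv (deriv H)) x)) x :=
      (((hasDerivAt_const x 1).sub (hd2 x).hasDerivAt)).add
        ((hasDerivAt_id x).mul (hd3 x).hasDerivAt)
    convert h using 1
    ring
  have hderivφ : ∀ x : ℝ, deriv φ x = x * deriv (deriv (deriv H)) x := fun x => (hDφ x).deriv
  -- f2 0 = 0 by oddness
  have heven : ∀ x, deriv H (-x) = deriv H x := by
    intro x
    have e1 : deriv (fun y => H (-y)) x = -deriv H (-x) := deriv_comp_neg H x
    have e2 : (fun y => H (-y)) = fun y => -H y := funext hodd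
    rw [e2, deriv.fun_neg] at e1
    linarith
  have hf20 : deriv (deriv H) 0 = 0 := by
    have e1 : deriv (fun y => deriv H (-y)) 0 = -deriv (deriv H) (-0) :=
      deriv_comp_neg (deriv H) 0
    have e2 : (fun y => deriv H (-y)) = deriv H := funext heven
    rw [e2, neg_zero] at e1
    linarith
  have hφ0 : φ 0 = 0 := by simp [hφdef, h1]
  have hG0 : G 0 = 0 := by simp [hG, h0]
  -- deriv H < 1 on (0,∞)
  have hf1anti : StrictAntiOn (deriv H) (Set.Ici 0) :=
    strictAntiOn_of_deriv_neg (convex_Ici 0) hd2.continuous.continuousOn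
      (by rw [interior_Ici]; exact fun x hx => hconc x hx)
  -- H < 1 everywhere
  have hHmono : StrictMono H := strictMono_of_deriv_pos hpos
  have hHlt1 : ∀ x, H x < 1 := by
    intro x
    have h1' : H (x + 1) ≤ 1 := hHmono.monotone.ge_of_tendsto hlim1 (x + 1)
    have := hHmono (show x < x + 1 by linarith)
    linarith
  have hGlow : ∀ x : ℝ, 0 < x → x - 2 < G x := by
    intro x hx
    have hGx : G x = x * (1 + deriv H x) - 2 * H x := by rw [hG]
    rw [hGx]
    have h1' := hHlt1 x
    have h2' := mul_pos hx (hpos x)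
    nlinarith
  -- φ antitone on [0, zH]
  have hφanti : AntitoneOn φ (Set.Icc 0 zH) := by
    refine antitoneOn_of_deriv_nonpos (convex_Icc 0 zH) hφdiff.continuous.continuousOn
      (hφdiff.differentiableOn) ?_
    rw [interior_Icc]
    intro x hx
    rw [hderivφ]
    exact mul_nonpos_of_nonneg_of_nonpos hx.1.le
      (h3a x (by rw [abs_of_pos hx.1]; exact hx.2.le))
  -- φ < 0 on (0, zH]
  have hφnegz : ∀ x, 0 < x → x ≤ zH → φ x < 0 := by
    intro x hx hxz
    by_contra hcon
    push_neg at hcon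
    have hmem0 : (0:ℝ) ∈ Set.Icc (0:ℝ) zH := ⟨le_rfl, hzH.le⟩
    have hmemx : x ∈ Set.Icc (0:ℝ) zH := ⟨hx.le, hxz⟩
    have hx0 : φ x ≤ 0 := hφ0 ▸ hφanti hmem0 hmemx hx.le
    have hφx : φ x = 0 := le_antisymm hx0 hcon
    have hzero : ∀ t ∈ Set.Icc 0 x, φ t = 0 := by
      intro t ht
      have h1' : φ t ≤ 0 := hφ0 ▸ hφanti hmem0 ⟨ht.1, ht.2.trans hxz⟩ ht.1
      have h2' : φ x ≤ φ t := hφanti ⟨ht.1, ht.2.trans hxz⟩ hmemx ht.2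
      linarith [hφx ▸ h2']
    have hf3 : ∀ t ∈ Set.Ioo (0:ℝ) x, deriv (deriv (deriv H)) t = 0 := by
      intro t ht
      have hev : φ =ᶠ[nhds t] (fun _ => (0:ℝ)) :=
        Filter.eventuallyEq_of_mem (Ioo_mem_nhds ht.1 ht.2)
          (fun s hs => hzero s ⟨hs.1.le, hs.2.le⟩)
      have := hev.deriv_eq
      rw [hderivφ t, deriv_const] at this
      have ht0 : t ≠ 0 := ne_of_gt ht.1
      exact (mul_eq_zero.mp this).resolve_left ht0
    have hmon : MonotoneOn (deriv (deriv H)) (Set.Icc 0 x) := by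
      refine monotoneOn_of_deriv_nonneg (convex_Icc 0 x) hd3.continuous.continuousOn
        hd3.differentiableOn ?_
      rw [interior_Icc]; intro t ht; rw [hf3 t ht]
    have hant : AntitoneOn (deriv (deriv H)) (Set.Icc 0 x) := by
      refine antitoneOn_of_deriv_nonpos (convex_Icc 0 x) hd3.continuous.continuousOn
        hd3.differentiableOn ?_
      rw [interior_Icc]; intro t ht; rw [hf3 t ht]
    have hmem0' : (0:ℝ) ∈ Set.Icc (0:ℝ) x := ⟨le_rfl, hx.le⟩
    have hmemx' : x ∈ Set.Icc (0:ℝ) x := ⟨hx.le, le_rfl⟩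
    have e1 : deriv (deriv H) 0 ≤ deriv (deriv H) x := hmon hmem0' hmemx' hx.le
    have := hconc x hx
    rw [hf20] at e1
    linarith
  -- φ strictly mono on [zH, ∞)
  have hφmono : StrictMonoOn φ (Set.Ici zH) := by
    refine strictMonoOn_of_deriv_pos (convex_Ici zH) hφdiff.continuous.continuousOn ?_
    rw [interior_Ici]
    intro x hx
    rw [hderivφ]
    exact mul_pos (hzH.trans hx) (h3b x (by rw [abs_of_pos (hzH.trans hx)]; exact hx))
  -- there is b > zH with φ b > 0
  have hb : ∃ b, zH < b ∧ 0 < φ b := by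
    by_contra hcon
    push_neg at hcon
    have hGanti : AntitoneOn G (Set.Ici zH) := by
      refine antitoneOn_of_deriv_nonpos (convex_Ici zH) hGdiff.continuous.continuousOn
        hGdiff.differentiableOn ?_
      rw [interior_Ici]
      intro x hx
      rw [hderivG]
      exact hcon x hx
    set M := max zH (G zH) + 3 with hM
    have hM1 : zH ≤ M := by
      have := le_max_left zH (G zH); linarith
    have hM0 : (0:ℝ) < M := lt_of_lt_of_le hzH hM1
    have e1 : G M ≤ G zH := hGanti (Set.self_mem_Ici) hM1 hM1
    have e2 : M - 2 < G M := hGlow M hM0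
    have e3 : G zH ≤ max zH (G zH) := le_max_right _ _
    linarith
  obtain ⟨b, hzb, hφb⟩ := hb
  have hφzH : φ zH < 0 := hφnegz zH hzH le_rfl
  obtain ⟨c, hc, hφc⟩ := intermediate_value_Ioo hzb.le hφdiff.continuous.continuousOn
    (Set.mem_Ioo.mpr ⟨hφzH, hφb⟩)
  have hc0 : 0 < c := hzH.trans hc.1
  -- sign of φ
  have hφneg : ∀ x, 0 < x → x < c → φ x < 0 := by
    intro x hx hxc
    rcases le_or_gt x zH with h | h
    · exact hφnegz x hx h
    · have := hφmono h.le hc.1.le hxc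
      linarith [hφc ▸ this]
  have hφpos : ∀ x, c < x → 0 < φ x := by
    intro x hx
    have := hφmono hc.1.le (hc.1.trans hx).le hx
    linarith [hφc ▸ this]
  -- G strictly decreasing on [0, c]
  have hGanti : StrictAntiOn G (Set.Icc 0 c) := by
    refine strictAntiOn_of_deriv_neg (convex_Icc 0 c) hGdiff.continuous.continuousOn ?_
    rw [interior_Icc]
    intro x hx
    rw [hderivG]
    exact hφneg x hx.1 hx.2
  have hGltc : ∀ x, 0 < x → x ≤ c → G x < 0 := by
    intro x hx hxc
    have := hGanti ⟨le_rfl, hc0.le⟩ ⟨hx.le, hxc⟩ hx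
    rw [hG0] at this
    exact this
  -- G strictly increasing on [c, ∞)
  have hGmono : StrictMonoOn G (Set.Ici c) := by
    refine strictMonoOn_of_deriv_pos (convex_Ici c) hGdiff.continuous.continuousOn ?_
    rw [interior_Ici]
    intro x hx
    rw [hderivG]
    exact hφpos x hx
  set B := max (c + 1) 3 with hB
  have hcB : c < B := lt_of_lt_of_le (by linarith) (le_max_left _ _)
  have hB3 : (3:ℝ) ≤ B := le_max_right _ _
  have hGB : 0 < G B := by
    have := hGlow B (by linarith)
    linarith
  have hGc : G c < 0 := hGltc c hc0 le_rfl
  obtain ⟨d₁, hd, hGd⟩ := intermediate_value_Ioo hcB.le hGdiff.continuous.continuousOn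
    (Set.mem_Ioo.mpr ⟨hGc, hGB⟩)
  have hd0 : 0 < d₁ := hc0.trans hd.1
  have hGneg : ∀ x, 0 < x → x < d₁ → G x < 0 := by
    intro x hx hxd
    rcases le_or_gt x c with h | h
    · exact hGltc x hx h
    · have := hGmono h.le hd.1.le hxd
      rw [hGd] at this
      exact this
  have hGpos : ∀ x, d₁ < x → 0 < G x := by
    intro x hx
    have := hGmono hd.1.le (hd.1.trans hx).le hx
    rw [hGd] at this
    exact this
  refine ⟨d₁, hd0, hGd, ?_, hGneg, hGpos⟩
  intro x hx hGx
  rcases lt_trichotomy x d₁ with h | h | h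
  · exact absurd hGx (ne_of_lt (hGneg x hx h))
  · exact h
  · exact absurd hGx (ne_of_gt (hGpos x h))
end

section
/- Define f(x, μ) = μ H(x) - x(μ - x/2) for x ≥ 0, where H satisfies (HT) and μ₁ = d₁/(1 - H'(d₁)) with d₁ the unique positive root of x(1+H'(x)) - 2H(x). Then for all 0 ≤ μ ≤ μ₁ and all x ≥ 0, f(x, μ) ≥ 0, with equality only when x = 0, or when x = d₁ and μ = μ₁. -/
theorem stmt_7 (H : ℝ → ℝ) (zH : ℝ) (hzH : 0 < zH)
    (hC3 : ContDiff ℝ 3 H)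
    (hodd : ∀ x, H (-x) = -H x)
    (h0 : H 0 = 0) (h1 : deriv H 0 = 1)
    (hpos : ∀ x, 0 < deriv H x)
    (hconc : ∀ x > (0:ℝ), deriv (deriv H) x < 0)
    (h3a : ∀ x : ℝ, |x| ≤ zH → deriv (deriv (deriv H)) x ≤ 0)
    (h3b : ∀ x : ℝ, zH < |x| → 0 < deriv (deriv (deriv H)) x)
    (hlim1 : Filter.Tendsto H Filter.atTop (nhds 1))
    (hlim2 : Filter.Tendsto H Filter.atBot (nhds (-1)))
    (d₁ : ℝ) (hd₁ : 0 < d₁)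
    (hroot : d₁ * (1 + deriv H d₁) = 2 * H d₁)
    (huniq : ∀ x > (0:ℝ), x * (1 + deriv H x) = 2 * H x → x = d₁)
    (μ₁ : ℝ) (hμ₁ : μ₁ = d₁ / (1 - deriv H d₁))
    (f : ℝ → ℝ → ℝ) (hf : f = fun x μ => μ * H x - x * (μ - x / 2)) :
    ∀ μ x : ℝ, 0 ≤ μ → μ ≤ μ₁ → 0 ≤ x →
      0 ≤ f x μ ∧ (f x μ = 0 → x = 0 ∨ (x = d₁ ∧ μ = μ₁)) := by
  -- smoothness facts
  have hdiffH : Differentiable ℝ H := hC3.differentiable (by norm_num)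
  have hC2 : ContDiff ℝ 2 (deriv H) := by
    have := hC3.iterate_deriv' 2 1; simpa using this
  have hC1 : ContDiff ℝ 1 (deriv (deriv H)) := by
    have := hC3.iterate_deriv' 1 2
    simpa [Function.iterate_succ, Function.comp] using this
  have hdiff1 : Differentiable ℝ (deriv H) := hC2.differentiable (by norm_num)
  have hdiff2 : Differentiable ℝ (deriv (deriv H)) := hC1.differentiable (by norm_num)
  have hcont1 : Continuous (deriv H) := hdiff1.continuous
  have hcont2 : Continuous (deriv (deriv H)) := hdiff2.continuous
  have hcontH : Continuous H := hdiffH.continuous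
  -- H' strictly decreasing on [0,∞), so H' x < 1 for x > 0
  have hH'anti : StrictAntiOn (deriv H) (Set.Ici 0) := by
    apply strictAntiOn_of_deriv_neg (convex_Ici 0) hcont1.continuousOn
    intro x hx
    rw [interior_Ici] at hx
    exact hconc x hx
  have hH'lt1 : ∀ x : ℝ, 0 < x → deriv H x < 1 := by
    intro x hx
    have := hH'anti (Set.self_mem_Ici) (Set.mem_Ici.2 hx.le) hx
    rwa [h1] at this
  -- H x < x for x > 0
  have hHltx : ∀ x : ℝ, 0 < x → H x < x := by
    intro x hx
    have hmono : StrictMonoOn (fun y => y - H y) (Set.Ici 0) := by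
      apply strictMonoOn_of_deriv_pos (convex_Ici 0)
        (continuous_id.sub hcontH).continuousOn
      intro y hy
      rw [interior_Ici] at hy
      have hder : HasDerivAt (fun y => y - H y) (1 - deriv H y) y :=
        (hasDerivAt_id y).sub (hdiffH y).hasDerivAt
      change 0 < deriv (fun y => y - H y) y
      rw [hder.deriv]
      linarith [hH'lt1 y hy]
    have := hmono Set.self_mem_Ici (Set.mem_Ici.2 hx.le) hx
    simp only [h0, sub_zero] at this
    linarith
  -- H < 1 everywhere
  have hHmono : StrictMono H := strictMono_of_deriv_pos hpos
  have hHle1 : ∀ x : ℝ, H x ≤ 1 := by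
    intro x
    apply ge_of_tendsto hlim1
    filter_upwards [Filter.eventually_ge_atTop x] with t ht
    exact hHmono.monotone ht
  have hHlt1 : ∀ x : ℝ, H x < 1 := fun x =>
    lt_of_lt_of_le (hHmono (lt_add_one x)) (hHle1 (x + 1))
  -- μ₁ > 0
  have hsub : (0:ℝ) < 1 - deriv H d₁ := by linarith [hH'lt1 d₁ hd₁]
  have hμpos : 0 < μ₁ := hμ₁ ▸ div_pos hd₁ hsub
  -- ψ and its derivatives
  set ψ : ℝ → ℝ := fun x => x * (1 + deriv H x) - 2 * H x with hψdef
  set ψ' : ℝ → ℝ := fun x => 1 - deriv H x + x * deriv (deriv H) x with hψ'def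
  have hψder : ∀ x : ℝ, HasDerivAt ψ (ψ' x) x := by
    intro x
    have h1' : HasDerivAt (fun y => y * (1 + deriv H y))
        (1 * (1 + deriv H x) + x * deriv (deriv H) x) x :=
      (hasDerivAt_id x).mul ((hdiff1 x).hasDerivAt.const_add 1)
    have h2' : HasDerivAt (fun y => 2 * H y) (2 * deriv H x) x :=
      ((hdiffH x).hasDerivAt).const_mul 2
    have := h1'.sub h2'
    refine this.congr_deriv ?_
    simp only [hψ'def]
    ring
  have hψ'der : ∀ x : ℝ, HasDerivAt ψ' (x * deriv (deriv (deriv H)) x) x := by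
    intro x
    have h1' : HasDerivAt (fun y => 1 - deriv H y) (-(deriv (deriv H) x)) x :=
      ((hdiff1 x).hasDerivAt).const_sub 1
    have h2' : HasDerivAt (fun y => y * deriv (deriv H) y)
        (1 * deriv (deriv H) x + x * deriv (deriv (deriv H)) x) x :=
      (hasDerivAt_id x).mul ((hdiff2 x).hasDerivAt)
    have := h1'.add h2'
    refine this.congr_deriv ?_
    ring
  have hψcont : Continuous ψ := by
    exact (continuous_id.mul (continuous_const.add hcont1)).sub
      (continuous_const.mul hcontH)
  have hψ'cont : Continuous ψ' := by
    exact (continuous_const.sub hcont1).add (continuous_id.mul hcont2)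
  have hψ0 : ψ 0 = 0 := by simp [hψdef, h0]
  have hψ'0 : ψ' 0 = 0 := by simp [hψ'def, h1]
  -- ψ' ≤ 0 on [0, zH]
  have hψ'anti : AntitoneOn ψ' (Set.Icc 0 zH) := by
    apply antitoneOn_of_deriv_nonpos (convex_Icc 0 zH) hψ'cont.continuousOn
    · intro x _
      exact (hψ'der x).differentiableAt.differentiableWithinAt
    · intro x hx
      rw [interior_Icc] at hx
      rw [(hψ'der x).deriv]
      have habs : |x| ≤ zH := by rw [abs_of_pos hx.1]; exact hx.2.le
      exact mul_nonpos_of_nonneg_of_nonpos hx.1.le (h3a x habs)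
  have hψ'le : ∀ x ∈ Set.Icc (0:ℝ) zH, ψ' x ≤ 0 := by
    intro x hx
    have := hψ'anti (Set.left_mem_Icc.2 hzH.le) hx hx.1
    rwa [hψ'0] at this
  -- ψ ≤ 0 on [0, zH]
  have hψanti : AntitoneOn ψ (Set.Icc 0 zH) := by
    apply antitoneOn_of_deriv_nonpos (convex_Icc 0 zH) hψcont.continuousOn
    · intro x _
      exact (hψder x).differentiableAt.differentiableWithinAt
    · intro x hx
      rw [interior_Icc] at hx
      rw [(hψder x).deriv]
      exact hψ'le x ⟨hx.1.le, hx.2.le⟩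
  have hψle : ∀ x ∈ Set.Icc (0:ℝ) zH, ψ x ≤ 0 := by
    intro x hx
    have := hψanti (Set.left_mem_Icc.2 hzH.le) hx hx.1
    rwa [hψ0] at this
  -- ψ ≠ 0 on positive reals except d₁
  have hψne : ∀ x : ℝ, 0 < x → x ≠ d₁ → ψ x ≠ 0 := by
    intro x hx hne h
    exact hne (huniq x hx (by simpa [hψdef, sub_eq_zero] using h))
  -- a point where ψ < 0
  set c0 : ℝ := min zH d₁ / 2 with hc0def
  have hc0pos : 0 < c0 := by
    simp only [hc0def]
    have : 0 < min zH d₁ := lt_min hzH hd₁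
    linarith
  have hc0lt : c0 < d₁ := by
    have h' : min zH d₁ ≤ d₁ := min_le_right _ _
    simp only [hc0def]
    have : 0 < min zH d₁ := lt_min hzH hd₁
    linarith
  have hc0le : c0 ≤ zH := by
    have h' : min zH d₁ ≤ zH := min_le_left _ _
    simp only [hc0def]; linarith [hzH]
  have hψc0 : ψ c0 < 0 :=
    lt_of_le_of_ne (hψle c0 ⟨hc0pos.le, hc0le⟩) (hψne c0 hc0pos hc0lt.ne)
  -- ψ < 0 on (0, d₁)
  have hψneg : ∀ x : ℝ, 0 < x → x < d₁ → ψ x < 0 := by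
    intro x hx hxd
    rcases lt_trichotomy (ψ x) 0 with h | h | h
    · exact h
    · exact absurd h (hψne x hx hxd.ne)
    · exfalso
      have hsubs : Set.uIcc c0 x ⊆ Set.Ioo 0 d₁ :=
        Set.ordConnected_Ioo.uIcc_subset ⟨hc0pos, hc0lt⟩ ⟨hx, hxd⟩
      have hmem : (0:ℝ) ∈ Set.uIcc (ψ c0) (ψ x) := by
        rw [Set.mem_uIcc]; left; exact ⟨hψc0.le, h.le⟩
      obtain ⟨z, hz, hz0⟩ := intermediate_value_uIcc hψcont.continuousOn hmem
      have hz' := hsubs hz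
      exact absurd (huniq z hz'.1 (by simpa [hψdef, sub_eq_zero] using hz0))
        (ne_of_lt hz'.2)
  -- ψ > 0 at a large point
  have hbig : ∀ x : ℝ, max (d₁ + 1) 3 ≤ x → 0 < ψ x := by
    intro x hx
    have hx3 : (3:ℝ) ≤ x := le_trans (le_max_right _ _) hx
    have hx0 : (0:ℝ) < x := by linarith
    have h1' : x * 1 < x * (1 + deriv H x) := by
      apply mul_lt_mul_of_pos_left _ hx0
      linarith [hpos x]
    have h2' : 2 * H x < 2 := by linarith [hHlt1 x]
    simp only [hψdef]
    nlinarith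
  -- ψ > 0 on (d₁, ∞)
  have hψpos : ∀ x : ℝ, d₁ < x → 0 < ψ x := by
    intro x hxd
    rcases lt_trichotomy (ψ x) 0 with h | h | h
    · exfalso
      set x1 : ℝ := max (d₁ + 1) 3 with hx1def
      have hx1d : d₁ < x1 := lt_of_lt_of_le (by linarith) (le_max_left _ _)
      have hψx1 : 0 < ψ x1 := hbig x1 le_rfl
      have hsubs : Set.uIcc x x1 ⊆ Set.Ioi d₁ :=
        Set.ordConnected_Ioi.uIcc_subset hxd hx1d
      have hmem : (0:ℝ) ∈ Set.uIcc (ψ x) (ψ x1) := by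
        rw [Set.mem_uIcc]; left; exact ⟨h.le, hψx1.le⟩
      obtain ⟨z, hz, hz0⟩ := intermediate_value_uIcc hψcont.continuousOn hmem
      have hz' : d₁ < z := hsubs hz
      exact absurd (huniq z (lt_trans hd₁ hz')
        (by simpa [hψdef, sub_eq_zero] using hz0)) (ne_of_gt hz')
    · exact absurd h (hψne x (lt_trans hd₁ hxd) (ne_of_gt hxd))
    · exact h
  -- the function g
  set g : ℝ → ℝ := fun x => x ^ 2 / 2 - μ₁ * (x - H x) with hgdef
  have hgder : ∀ x : ℝ, HasDerivAt g (x - μ₁ * (1 - deriv H x)) x := by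
    intro x
    have h1' : HasDerivAt (fun y : ℝ => y ^ 2 / 2) x x := by
      have := (hasDerivAt_pow 2 x).div_const 2
      refine this.congr_deriv ?_
      simp
    have h2' : HasDerivAt (fun y => μ₁ * (y - H y)) (μ₁ * (1 - deriv H x)) x :=
      ((hasDerivAt_id x).sub (hdiffH x).hasDerivAt).const_mul μ₁
    exact h1'.sub h2'
  have hgcont : Continuous g := by
    exact ((continuous_pow 2).div_const 2).sub
      (continuous_const.mul (continuous_id.sub hcontH))
  have hg0 : g 0 = 0 := by simp [hgdef, h0]
  have hgd₁ : g d₁ = 0 := by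
    have hne : (1:ℝ) - deriv H d₁ ≠ 0 := ne_of_gt hsub
    simp only [hgdef, hμ₁]
    field_simp
    nlinarith [hroot]
  -- key identity: x * g' x - 2 * g x = μ₁ * ψ x
  have hkey : ∀ x : ℝ, x * (x - μ₁ * (1 - deriv H x)) - 2 * g x = μ₁ * ψ x := by
    intro x
    simp only [hgdef, hψdef]
    ring
  -- derivative of q = g / x²
  have hqder : ∀ t : ℝ, 0 < t →
      HasDerivAt (fun x => g x / x ^ 2) (μ₁ * ψ t / t ^ 3) t := by
    intro t ht
    have hden : (t:ℝ) ^ 2 ≠ 0 := pow_ne_zero _ ht.ne'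
    have := (hgder t).div (hasDerivAt_pow 2 t) hden
    refine this.congr_deriv ?_
    have h2 : ((2:ℕ):ℝ) * t ^ (2 - 1) = 2 * t := by norm_num
    rw [h2]
    rw [div_eq_div_iff (by positivity) (by positivity)]
    nlinarith [hkey t, ht]
  -- g > 0 on (0, d₁)
  have hgpos1 : ∀ x : ℝ, 0 < x → x < d₁ → 0 < g x := by
    intro x hx hxd
    have hanti : StrictAntiOn (fun y => g y / y ^ 2) (Set.Icc x d₁) := by
      apply strictAntiOn_of_deriv_neg (convex_Icc x d₁)
      · apply ContinuousOn.div hgcont.continuousOn (continuous_pow 2).continuousOn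
        intro y hy
        exact pow_ne_zero _ (ne_of_gt (lt_of_lt_of_le hx hy.1))
      · intro y hy
        rw [interior_Icc] at hy
        have hy0 : 0 < y := lt_trans hx hy.1
        rw [(hqder y hy0).deriv]
        apply div_neg_of_neg_of_pos _ (by positivity)
        exact mul_neg_of_pos_of_neg hμpos (hψneg y hy0 hy.2)
    have hq := hanti (Set.left_mem_Icc.2 hxd.le) (Set.right_mem_Icc.2 hxd.le) hxd
    simp only [hgd₁, zero_div] at hq
    have hx2 : (0:ℝ) < x ^ 2 := by positivity
    have := mul_pos hq hx2
    rwa [div_mul_cancel₀ _ (ne_of_gt hx2)] at this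
  -- g > 0 on (d₁, ∞)
  have hgpos2 : ∀ x : ℝ, d₁ < x → 0 < g x := by
    intro x hxd
    have hmono : StrictMonoOn (fun y => g y / y ^ 2) (Set.Icc d₁ x) := by
      apply strictMonoOn_of_deriv_pos (convex_Icc d₁ x)
      · apply ContinuousOn.div hgcont.continuousOn (continuous_pow 2).continuousOn
        intro y hy
        exact pow_ne_zero _ (ne_of_gt (lt_of_lt_of_le hd₁ hy.1))
      · intro y hy
        rw [interior_Icc] at hy
        have hy0 : 0 < y := lt_trans hd₁ hy.1
        rw [(hqder y hy0).deriv]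
        apply div_pos _ (by positivity)
        exact mul_pos hμpos (hψpos y hy.1)
    have hq := hmono (Set.left_mem_Icc.2 hxd.le) (Set.right_mem_Icc.2 hxd.le) hxd
    simp only [hgd₁, zero_div] at hq
    have hx0 : (0:ℝ) < x := lt_trans hd₁ hxd
    have hx2 : (0:ℝ) < x ^ 2 := pow_pos hx0 2
    have := mul_pos hq hx2
    rwa [div_mul_cancel₀ _ (ne_of_gt hx2)] at this
  -- g nonneg on [0,∞)
  have hgnn : ∀ x : ℝ, 0 ≤ x → 0 ≤ g x := by
    intro x hx
    rcases eq_or_lt_of_le hx with h | h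
    · rw [← h, hg0]
    · rcases lt_trichotomy x d₁ with h' | h' | h'
      · exact (hgpos1 x h h').le
      · rw [h', hgd₁]
      · exact (hgpos2 x h').le
  -- final assembly
  intro μ x hμ0 hμle hx
  have hfeq : f x μ = g x + (μ₁ - μ) * (x - H x) := by
    rw [hf]
    simp only [hgdef]
    ring
  have hxH : 0 ≤ x - H x := by
    rcases eq_or_lt_of_le hx with h | h
    · rw [← h, h0]; norm_num
    · linarith [hHltx x h]
  have hterm : 0 ≤ (μ₁ - μ) * (x - H x) := mul_nonneg (by linarith) hxH
  constructor
  · rw [hfeq]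
    have := hgnn x hx
    linarith
  · intro hf0
    rcases eq_or_lt_of_le hx with h | h
    · exact Or.inl h.symm
    · right
      have hgx0 : g x = 0 := by
        rw [hfeq] at hf0
        have := hgnn x hx
        linarith
      have hxd : x = d₁ := by
        by_contra hne
        rcases lt_or_gt_of_ne hne with h' | h'
        · exact absurd hgx0 (ne_of_gt (hgpos1 x h h'))
        · exact absurd hgx0 (ne_of_gt (hgpos2 x h'))
      refine ⟨hxd, ?_⟩
      have hxH' : 0 < x - H x := by linarith [hHltx x h]
      rw [hfeq, hgx0] at hf0
      have : (μ₁ - μ) * (x - H x) = 0 := by linarith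
      rcases mul_eq_zero.1 this with h' | h'
      · linarith
      · linarith
end

section
/- Let H satisfy (HT). The map x ↦ 2H(x) / ((1 + H'(x))(1 - H'(x))) is strictly monotone increasing on [d₁, ∞), where d₁ is the unique positive root of x(1 + H'(x)) - 2H(x). -/
theorem stmt_10 (H : ℝ → ℝ) (zH : ℝ) (hzH : 0 < zH)
    (hC3 : ContDiff ℝ 3 H)
    (hodd : ∀ x, H (-x) = -H x)
    (h0 : H 0 = 0) (h1 : deriv H 0 = 1)
    (hH' : ∀ x > (0:ℝ), 0 < deriv H x ∧ deriv H x < 1)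
    (hconc : ∀ x > (0:ℝ), deriv (deriv H) x < 0)
    (h3a : ∀ x : ℝ, 0 ≤ x → x ≤ zH → deriv (deriv (deriv H)) x ≤ 0)
    (h3b : ∀ x : ℝ, zH < x → 0 < deriv (deriv (deriv H)) x)
    (hlim1 : Filter.Tendsto H Filter.atTop (nhds 1))
    (hlim2 : Filter.Tendsto H Filter.atBot (nhds (-1)))
    (d₁ : ℝ) (hd₁ : 0 < d₁)
    (hroot : d₁ * (1 + deriv H d₁) = 2 * H d₁)
    (huniq : ∀ x > (0:ℝ), x * (1 + deriv H x) = 2 * H x → x = d₁) :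
    StrictMonoOn (fun x => 2 * H x / ((1 + deriv H x) * (1 - deriv H x)))
      (Set.Ici d₁) := by
  -- Differentiability facts
  have hC2 : ContDiff ℝ 2 (deriv H) := by
    have h3 : ContDiff ℝ ((2:ℕ)+1 : ℕ) H := by exact_mod_cast hC3
    exact (contDiff_succ_iff_deriv.mp (by exact_mod_cast h3)).2.2
  have hC1 : ContDiff ℝ 1 (deriv (deriv H)) := by
    have h2 : ContDiff ℝ ((1:ℕ)+1 : ℕ) (deriv H) := by exact_mod_cast hC2
    exact (contDiff_succ_iff_deriv.mp (by exact_mod_cast h2)).2.2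
  have dH : Differentiable ℝ H := hC3.differentiable (by norm_num)
  have dH' : Differentiable ℝ (deriv H) := hC2.differentiable (by norm_num)
  have dH'' : Differentiable ℝ (deriv (deriv H)) := hC1.differentiable (by norm_num)
  -- auxiliary functions
  set ψ : ℝ → ℝ := fun x => x * (1 + deriv H x) - 2 * H x with hψdef
  set g : ℝ → ℝ := fun x => 1 - deriv H x + x * deriv (deriv H) x with hgdef
  have hψd : ∀ x : ℝ, HasDerivAt ψ (g x) x := by
    intro x
    have hd1 : HasDerivAt (deriv H) (deriv (deriv H) x) x := (dH' x).hasDerivAt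
    have hd0 : HasDerivAt H (deriv H x) x := (dH x).hasDerivAt
    have := ((hasDerivAt_id x).mul ((hasDerivAt_const x (1:ℝ)).add hd1)).sub
      (hd0.const_mul (2:ℝ))
    refine this.congr_deriv ?_
    simp only [hgdef, Pi.add_apply, id]; ring
  have hgd : ∀ x : ℝ, HasDerivAt g (x * deriv (deriv (deriv H)) x) x := by
    intro x
    have hd1 : HasDerivAt (deriv H) (deriv (deriv H) x) x := (dH' x).hasDerivAt
    have hd2 : HasDerivAt (deriv (deriv H)) (deriv (deriv (deriv H)) x) x :=
      (dH'' x).hasDerivAt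
    have := ((hasDerivAt_const x (1:ℝ)).sub hd1).add ((hasDerivAt_id x).mul hd2)
    refine this.congr_deriv ?_
    simp only [hgdef, Pi.add_apply, id]; ring
  have dψ : Differentiable ℝ ψ := fun x => (hψd x).differentiableAt
  have dg : Differentiable ℝ g := fun x => (hgd x).differentiableAt
  have g0 : g 0 = 0 := by simp [hgdef, h1]
  have ψ0 : ψ 0 = 0 := by simp [hψdef, h0]
  have ψd₁ : ψ d₁ = 0 := by simp [hψdef, sub_eq_zero, hroot]
  -- g is antitone on [0, zH]
  have ganti : AntitoneOn g (Set.Icc 0 zH) := by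
    apply antitoneOn_of_deriv_nonpos (convex_Icc 0 zH) dg.continuous.continuousOn
      dg.differentiableOn
    intro x hx
    rw [interior_Icc] at hx
    rw [(hgd x).deriv]
    exact mul_nonpos_of_nonneg_of_nonpos hx.1.le (h3a x hx.1.le hx.2.le)
  -- g is strictly monotone on [zH, ∞)
  have gmono : StrictMonoOn g (Set.Ici zH) := by
    apply strictMonoOn_of_deriv_pos (convex_Ici zH) dg.continuous.continuousOn
    intro x hx
    rw [interior_Ici] at hx
    rw [(hgd x).deriv]
    exact mul_pos (hzH.trans hx) (h3b x hx)
  -- core contradiction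
  have core : ¬ (∀ x ∈ Set.Icc (0:ℝ) d₁, g x ≤ 0) := by
    intro hle
    have hanti : AntitoneOn ψ (Set.Icc 0 d₁) := by
      apply antitoneOn_of_deriv_nonpos (convex_Icc 0 d₁) dψ.continuous.continuousOn
        dψ.differentiableOn
      intro x hx
      rw [interior_Icc] at hx
      rw [(hψd x).deriv]
      exact hle x ⟨hx.1.le, hx.2.le⟩
    have hmem : d₁/2 ∈ Set.Icc (0:ℝ) d₁ := ⟨by linarith, by linarith⟩
    have hA : ψ (d₁/2) ≤ ψ 0 := hanti ⟨le_rfl, hd₁.le⟩ hmem (by linarith)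
    have hB : ψ d₁ ≤ ψ (d₁/2) := hanti hmem ⟨hd₁.le, le_rfl⟩ (by linarith)
    have hzero : ψ (d₁/2) = 0 := by rw [ψ0] at hA; rw [ψd₁] at hB; linarith
    have : d₁/2 = d₁ := by
      apply huniq (d₁/2) (by linarith)
      have : (d₁/2) * (1 + deriv H (d₁/2)) - 2 * H (d₁/2) = 0 := hzero
      linarith
    linarith
  -- zH ≤ d₁
  have hzd : zH ≤ d₁ := by
    by_contra hlt
    push_neg at hlt
    apply core
    intro x hx
    have : g x ≤ g 0 := ganti ⟨le_rfl, hzH.le⟩ ⟨hx.1, hx.2.trans hlt.le⟩ hx.1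
    rwa [g0] at this
  -- g d₁ ≥ 0
  have gd₁ : 0 ≤ g d₁ := by
    by_contra hneg
    push_neg at hneg
    apply core
    intro x hx
    rcases le_or_gt x zH with hxz | hxz
    · have : g x ≤ g 0 := ganti ⟨le_rfl, hzH.le⟩ ⟨hx.1, hxz⟩ hx.1
      rwa [g0] at this
    · rcases eq_or_lt_of_le hx.2 with heq | hlt
      · rw [heq]; exact hneg.le
      · exact (gmono (Set.mem_Ici.mpr hxz.le) (Set.mem_Ici.mpr hzd) hlt).le.trans hneg.le
  -- g positive beyond d₁
  have gpos : ∀ x > d₁, 0 < g x := by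
    intro x hx
    exact lt_of_le_of_lt gd₁ (gmono (Set.mem_Ici.mpr hzd) (Set.mem_Ici.mpr (hzd.trans hx.le)) hx)
  -- ψ positive beyond d₁
  have ψmono : StrictMonoOn ψ (Set.Ici d₁) := by
    apply strictMonoOn_of_deriv_pos (convex_Ici d₁) dψ.continuous.continuousOn
    intro x hx
    rw [interior_Ici] at hx
    rw [(hψd x).deriv]
    exact gpos x hx
  have ψpos : ∀ x > d₁, 0 < ψ x := by
    intro x hx
    have := ψmono Set.self_mem_Ici (Set.mem_Ici.mpr hx.le) hx
    rwa [ψd₁] at this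
  -- positivity of φ = 1 - (H')² + 2 H H''
  have φpos : ∀ x > d₁, 0 < 1 - (deriv H x)^2 + 2 * H x * deriv (deriv H) x := by
    intro x hx
    have hx0 : 0 < x := hd₁.trans hx
    obtain ⟨ha0, ha1⟩ := hH' x hx0
    have hb : deriv (deriv H) x < 0 := hconc x hx0
    have hg : 0 < g x := gpos x hx
    have hψ : 0 < ψ x := ψpos x hx
    have hgx : 0 < 1 - deriv H x + x * deriv (deriv H) x := hg
    have hψx : 0 < x * (1 + deriv H x) - 2 * H x := hψ
    have e1 : 0 < (1 + deriv H x) * (1 - deriv H x + x * deriv (deriv H) x) :=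
      mul_pos (by linarith) hgx
    have e2 : x * (1 + deriv H x) * deriv (deriv H) x < 2 * H x * deriv (deriv H) x :=
      mul_lt_mul_of_neg_right (by linarith) hb
    nlinarith [e1, e2]
  -- continuity of the target function
  have hcont : ContinuousOn (fun x => 2 * H x / ((1 + deriv H x) * (1 - deriv H x)))
      (Set.Ici d₁) := by
    apply ContinuousOn.div
    · exact (continuous_const.mul dH.continuous).continuousOn
    · exact ((continuous_const.add dH'.continuous).mul
        (continuous_const.sub dH'.continuous)).continuousOn
    · intro x hx
      have hx0 : 0 < x := lt_of_lt_of_le hd₁ hx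
      obtain ⟨ha0, ha1⟩ := hH' x hx0
      exact ne_of_gt (mul_pos (by linarith) (by linarith))
  -- conclusion
  apply strictMonoOn_of_deriv_pos (convex_Ici d₁) hcont
  intro x hx
  rw [interior_Ici] at hx
  have hx0 : 0 < x := hd₁.trans hx
  obtain ⟨ha0, ha1⟩ := hH' x hx0
  have hd1 : HasDerivAt (deriv H) (deriv (deriv H) x) x := (dH' x).hasDerivAt
  have hd0 : HasDerivAt H (deriv H x) x := (dH x).hasDerivAt
  have hu : HasDerivAt (fun x => 2 * H x) (2 * deriv H x) x := hd0.const_mul 2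
  have hv : HasDerivAt (fun x => (1 + deriv H x) * (1 - deriv H x))
      ((0 + deriv (deriv H) x) * (1 - deriv H x)
        + (1 + deriv H x) * (0 - deriv (deriv H) x)) x :=
    ((hasDerivAt_const x (1:ℝ)).add hd1).mul ((hasDerivAt_const x (1:ℝ)).sub hd1)
  have hvpos : 0 < (1 + deriv H x) * (1 - deriv H x) :=
    mul_pos (by linarith) (by linarith)
  have hf := hu.div hv (ne_of_gt hvpos)
  rw [show (fun x => 2 * H x / ((1 + deriv H x) * (1 - deriv H x))) =
      ((fun x => 2 * H x) / fun x => (1 + deriv H x) * (1 - deriv H x)) from rfl, hf.deriv]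
  apply div_pos
  · have hnum : 2 * deriv H x * ((1 + deriv H x) * (1 - deriv H x))
        - 2 * H x * ((0 + deriv (deriv H) x) * (1 - deriv H x)
          + (1 + deriv H x) * (0 - deriv (deriv H) x))
        = 2 * deriv H x * (1 - (deriv H x)^2 + 2 * H x * deriv (deriv H) x) := by
      ring
    rw [hnum]
    exact mul_pos (by linarith) (φpos x hx)
  · positivity
end

section
/- Suppose μ ≤ μ₁ and there exist s₁ ∈ (-1/√g, μ) and z₁ < s₁ satisfying the system: -(z₁² - s₁²)/2 + μ H(z₁ - s₁) = 0 and z₁ = μ H'(s₁ - z₁). Then we reach a contradiction; i.e. no such pair (s₁, z₁) exists. Equivalently, for all s ∈ [-1/√g, μ) and z < s, φ(s,z) := -(z² - s²)/2 + μ H(z - s) cannot vanish with ∂_z φ(s,z) = 0. -/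
set_option maxHeartbeats 1000000

open Set Filter Topology

theorem stmt_11 (H : ℝ → ℝ) (zH : ℝ) (hzH : 0 < zH)
    (hC3 : ContDiff ℝ 3 H)
    (hodd : ∀ x, H (-x) = -H x)
    (h0 : H 0 = 0) (h1 : deriv H 0 = 1)
    (hH' : ∀ x > (0:ℝ), 0 < deriv H x ∧ deriv H x < 1)
    (hconc : ∀ x > (0:ℝ), deriv (deriv H) x < 0)
    (h3a : ∀ x : ℝ, 0 ≤ x → x ≤ zH → deriv (deriv (deriv H)) x ≤ 0)
    (h3b : ∀ x : ℝ, zH < x → 0 < deriv (deriv (deriv H)) x)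
    (hlim1 : Filter.Tendsto H Filter.atTop (nhds 1))
    (hlim2 : Filter.Tendsto H Filter.atBot (nhds (-1)))
    (g : ℝ) (hg : 0 < g)
    (d₁ : ℝ) (hd₁ : 0 < d₁)
    (hroot : d₁ * (1 + deriv H d₁) = 2 * H d₁)
    (huniq : ∀ x > (0:ℝ), x * (1 + deriv H x) = 2 * H x → x = d₁)
    (μ₁ μ : ℝ) (hμ₁ : μ₁ = d₁ / (1 - deriv H d₁)) (hμ : μ ≤ μ₁) :
    ¬ ∃ s₁ z₁ : ℝ, -1 / Real.sqrt g < s₁ ∧ s₁ < μ ∧ z₁ < s₁ ∧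
      -(z₁ ^ 2 - s₁ ^ 2) / 2 + μ * H (z₁ - s₁) = 0 ∧
      z₁ = μ * deriv H (s₁ - z₁) := by
  rintro ⟨s₁, z₁, _hs₁g, hs₁μ, hz₁, heq1, heq2⟩
  -- differentiability of H, H', H''
  have h3 : ContDiff ℝ ((2:ℕ)+1) H := by norm_num [hC3]
  have h2 := (contDiff_succ_iff_deriv.mp h3).2.2
  have h2' : ContDiff ℝ ((1:ℕ)+1) (deriv H) := by norm_num at h2 ⊢; exact h2
  have h1'' := (contDiff_succ_iff_deriv.mp h2').2.2
  have dH : Differentiable ℝ H := h3.differentiable (by norm_num)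
  have dH1 : Differentiable ℝ (deriv H) := h2'.differentiable (by norm_num)
  have dH2 : Differentiable ℝ (deriv (deriv H)) := h1''.differentiable (by norm_num)
  -- the auxiliary functions f and f1 = f'
  set f1 : ℝ → ℝ := fun x => 1 - deriv H x + x * deriv (deriv H) x with hf1def
  set f : ℝ → ℝ := fun x => x * (1 + deriv H x) - 2 * H x with hfdef
  have hfD : ∀ x : ℝ, HasDerivAt f (f1 x) x := by
    intro x
    have ha : HasDerivAt (fun y => y * (1 + deriv H y))
        (1 * (1 + deriv H x) + x * deriv (deriv H) x) x :=
      (hasDerivAt_id x).mul ((dH1 x).hasDerivAt.const_add 1)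
    have hb : HasDerivAt (fun y => 2 * H y) (2 * deriv H x) x :=
      (dH x).hasDerivAt.const_mul 2
    have := ha.sub hb
    refine this.congr_deriv ?_
    simp only [hf1def]; ring
  have hf1D : ∀ x : ℝ, HasDerivAt f1 (x * deriv (deriv (deriv H)) x) x := by
    intro x
    have ha : HasDerivAt (fun y => 1 - deriv H y) (-(deriv (deriv H) x)) x :=
      (dH1 x).hasDerivAt.const_sub 1
    have hb : HasDerivAt (fun y => y * deriv (deriv H) y)
        (1 * deriv (deriv H) x + x * deriv (deriv (deriv H)) x) x :=
      (hasDerivAt_id x).mul (dH2 x).hasDerivAt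
    have := ha.add hb
    refine this.congr_deriv ?_
    ring
  have cf : Continuous f := by
    simp only [hfdef]
    exact (continuous_id.mul (continuous_const.add dH1.continuous)).sub
      (continuous_const.mul dH.continuous)
  have cf1 : Continuous f1 := by
    simp only [hf1def]
    exact (continuous_const.sub dH1.continuous).add (continuous_id.mul dH2.continuous)
  have hf0 : f 0 = 0 := by simp [hfdef, h0]
  have hf10 : f1 0 = 0 := by simp [hf1def, h1]
  have hfd₁0 : f d₁ = 0 := by simp only [hfdef]; linarith
  -- f1 ≤ 0 on [0, zH]
  have hf1anti : AntitoneOn f1 (Icc 0 zH) := by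
    apply antitoneOn_of_deriv_nonpos (convex_Icc 0 zH) cf1.continuousOn
    · intro x _; exact (hf1D x).differentiableAt.differentiableWithinAt
    · intro x hx
      rw [interior_Icc] at hx
      rw [(hf1D x).deriv]
      exact mul_nonpos_of_nonneg_of_nonpos hx.1.le (h3a x hx.1.le hx.2.le)
  have hf1le : ∀ x ∈ Icc (0:ℝ) zH, f1 x ≤ 0 := by
    intro x hx
    have := hf1anti (left_mem_Icc.mpr hzH.le) hx hx.1
    rwa [hf10] at this
  -- f ≤ 0 on (0, zH]
  have hfanti : ∀ t : ℝ, 0 < t → t ≤ zH → f t ≤ 0 := by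
    intro t ht0 htz
    have hA : AntitoneOn f (Icc 0 t) := by
      apply antitoneOn_of_deriv_nonpos (convex_Icc 0 t) cf.continuousOn
      · intro x _; exact (hfD x).differentiableAt.differentiableWithinAt
      · intro x hx
        rw [interior_Icc] at hx
        rw [(hfD x).deriv]
        exact hf1le x ⟨hx.1.le, hx.2.le.trans htz⟩
    have := hA (left_mem_Icc.mpr ht0.le) (right_mem_Icc.mpr ht0.le) ht0.le
    rwa [hf0] at this
  -- the point p
  have hmin : 0 < min zH d₁ := lt_min hzH hd₁
  set p : ℝ := min zH d₁ / 2 with hpdef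
  have hp0 : 0 < p := by positivity
  have hpz : p ≤ zH := (half_le_self hmin.le).trans (min_le_left _ _)
  have hpd : p < d₁ := lt_of_lt_of_le (half_lt_self hmin) (min_le_right _ _)
  have hfp : f p < 0 := by
    refine lt_of_le_of_ne (hfanti p hp0 hpz) fun h => absurd (huniq p hp0 ?_) (ne_of_lt hpd)
    simp only [hfdef] at h; linarith
  -- f < 0 on (0, d₁)
  have hneg : ∀ x : ℝ, 0 < x → x < d₁ → f x < 0 := by
    intro x hx0 hxd
    rcases lt_trichotomy (f x) 0 with h | h | h
    · exact h
    · exact absurd (huniq x hx0 (by simp only [hfdef] at h; linarith)) (ne_of_lt hxd)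
    · exfalso
      obtain ⟨c, hc, hfc⟩ := intermediate_value_uIcc (cf.continuousOn (s := uIcc p x))
        (show (0:ℝ) ∈ uIcc (f p) (f x) from mem_uIcc.mpr (Or.inl ⟨hfp.le, h.le⟩))
      have hc0 : 0 < c := by
        rcases mem_uIcc.mp hc with ⟨h1', _⟩ | ⟨h1', _⟩ <;> linarith
      have hcd : c < d₁ := by
        rcases mem_uIcc.mp hc with ⟨_, h2'⟩ | ⟨_, h2'⟩ <;> linarith
      exact absurd (huniq c hc0 (by simp only [hfdef] at hfc; linarith)) (ne_of_lt hcd)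
  -- f1 d₁ ≥ 0 via slopes from the left
  have hf1d₁ : 0 ≤ f1 d₁ := by
    have hslope := hasDerivAt_iff_tendsto_slope.mp (hfD d₁)
    have hNB : (𝓝[Ioo (0:ℝ) d₁] d₁).NeBot := by
      refine mem_closure_iff_nhdsWithin_neBot.mp ?_
      rw [closure_Ioo (ne_of_lt hd₁)]
      exact ⟨hd₁.le, le_refl _⟩
    have ht : Tendsto (slope f d₁) (𝓝[Ioo (0:ℝ) d₁] d₁) (𝓝 (f1 d₁)) :=
      hslope.mono_left (nhdsWithin_mono _ fun y hy => ne_of_lt hy.2)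
    refine ge_of_tendsto ht ?_
    filter_upwards [self_mem_nhdsWithin] with y hy
    have hfy : f y < 0 := hneg y hy.1 hy.2
    rw [slope_def_field, hfd₁0]
    exact div_nonneg_iff.mpr (Or.inr ⟨by linarith, by linarith [hy.2]⟩)
  -- zH < d₁
  have hzd₁ : zH < d₁ := by
    by_contra hcon
    push_neg at hcon
    have hmono : MonotoneOn f (Icc 0 d₁) := by
      apply monotoneOn_of_deriv_nonneg (convex_Icc 0 d₁) cf.continuousOn
      · intro x _; exact (hfD x).differentiableAt.differentiableWithinAt
      · intro x hx
        rw [interior_Icc] at hx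
        rw [(hfD x).deriv]
        have hle : f1 x ≤ 0 := hf1le x ⟨hx.1.le, hx.2.le.trans hcon⟩
        have hge : f1 d₁ ≤ f1 x :=
          hf1anti ⟨hx.1.le, hx.2.le.trans hcon⟩ ⟨hd₁.le, hcon⟩ hx.2.le
        linarith
    have := hmono (left_mem_Icc.mpr hd₁.le) ⟨hp0.le, hpd.le⟩ hp0.le
    rw [hf0] at this
    linarith
  -- f1 ≥ 0 on [d₁, ∞)
  have hf1mono : StrictMonoOn f1 (Ici zH) := by
    apply strictMonoOn_of_deriv_pos (convex_Ici zH) cf1.continuousOn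
    intro x hx
    rw [interior_Ici] at hx
    rw [(hf1D x).deriv]
    exact mul_pos (hzH.trans hx) (h3b x hx)
  have hf1nonneg : ∀ x : ℝ, d₁ ≤ x → 0 ≤ f1 x := by
    intro x hx
    exact hf1d₁.trans (hf1mono.monotoneOn hzd₁.le (hzd₁.le.trans hx) hx)
  -- now the concrete point d = s₁ - z₁
  set d : ℝ := s₁ - z₁ with hd
  have hd0 : 0 < d := sub_pos.mpr hz₁
  have hH'd := hH' d hd0
  have h1m : 0 < 1 - deriv H d := by linarith [hH'd.2]
  have heq1' : (s₁ ^ 2 - z₁ ^ 2) / 2 = μ * H d := by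
    have hz : z₁ - s₁ = -d := by rw [hd]; ring
    rw [hz, hodd] at heq1
    linarith
  have hkey : d < μ * (1 - deriv H d) := by
    have h' : μ * deriv H d + d < μ := by rw [← heq2]; linarith
    nlinarith
  have hμ0 : 0 < μ := by nlinarith
  have e1 : d ^ 2 + 2 * d * z₁ = 2 * (μ * H d) := by
    linear_combination 2 * heq1' + (d + z₁ + s₁) * hd
  have hfd_pos : 0 < f d := by
    have expand : μ * f d = d * (μ * (1 - deriv H d) - d) := by
      simp only [hfdef]
      linear_combination e1 - 2 * d * heq2
    nlinarith [mul_pos hd0 (show 0 < μ * (1 - deriv H d) - d by linarith)]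
  have hd_gt : d₁ < d := by
    rcases lt_trichotomy d d₁ with h | h | h
    · exact absurd (hneg d hd0 h) (by linarith)
    · rw [h] at hfd_pos; linarith
    · exact h
  -- g(x) = x / (1 - H'(x)) is monotone on [d₁, d]
  set G : ℝ → ℝ := fun x => x / (1 - deriv H x) with hGdef
  have hGD : ∀ x ∈ Icc d₁ d, HasDerivAt G (f1 x / (1 - deriv H x) ^ 2) x := by
    intro x hx
    have hxpos : 0 < x := hd₁.trans_le hx.1
    have hden : 0 < 1 - deriv H x := by linarith [(hH' x hxpos).2]
    have h := (hasDerivAt_id x).div ((dH1 x).hasDerivAt.const_sub 1) hden.ne'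
    refine h.congr_deriv ?_
    simp only [hf1def, id_eq]
    ring
  have hGmono : MonotoneOn G (Icc d₁ d) := by
    apply monotoneOn_of_deriv_nonneg (convex_Icc d₁ d)
    · intro x hx; exact (hGD x hx).continuousAt.continuousWithinAt
    · intro x hx
      exact (hGD x (interior_subset hx)).differentiableAt.differentiableWithinAt
    · intro x hx
      rw [(hGD x (interior_subset hx)).deriv]
      rw [interior_Icc] at hx
      exact div_nonneg (hf1nonneg x hx.1.le) (sq_nonneg _)
  have hfinal : d₁ / (1 - deriv H d₁) ≤ d / (1 - deriv H d) :=
    hGmono (left_mem_Icc.mpr hd_gt.le) (right_mem_Icc.mpr hd_gt.le) hd_gt.le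
  have hμd : μ ≤ d / (1 - deriv H d) := by rw [hμ₁] at hμ; linarith
  have := (le_div_iff₀ h1m).mp hμd
  linarith
end
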